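/- arXiv:1403.4708 — 2 statements merged into one kernel-verified Lean document; each statement's English description precedes it below -/
import Mathlib

section
/- Let q be a prime power with q ≡ 4 or 7 (mod 9), let G = SL_3(F_q), and let D be a Sylow 3-subgroup of G. Then D may be chosen inside the group of monomial matrices (matrices with exactly one nonzero entry in each row and column) of determinant 1, and C_G(D) ≤ D. -/
namespace SL3Proof
open Matrix Equiv
variable {F : Type} [Field F]

def mm (σ : Equiv.Perm (Fin 3)) (v : Fin 3 → F) : Matrix (Fin 3) (Fin 3) F :=
  Matrix.of fun i j => if i = σ j then v j else 0

lemma mm_apply (σ : Equiv.Perm (Fin 3)) (v : Fin 3 → F) (i j : Fin 3) :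
    mm σ v i j = if i = σ j then v j else 0 := rfl

lemma mm_mul (σ τ : Equiv.Perm (Fin 3)) (v w : Fin 3 → F) :
    mm σ v * mm τ w = mm (σ * τ) (fun j => v (τ j) * w j) := by
  ext i j
  rw [Matrix.mul_apply, Finset.sum_eq_single (τ j)]
  · simp [mm_apply, Equiv.Perm.mul_apply]
    exact if_congr Iff.rfl rfl rfl
  · intro k _ hk
    simp [mm_apply, hk]
  · simp

lemma mm_one (v : Fin 3 → F) : mm 1 v = Matrix.diagonal v := by
  ext i j
  rw [mm_apply, Matrix.diagonal_apply]
  by_cases h : i = j <;> simp [h]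

lemma mm_eq_perm_mul (σ : Equiv.Perm (Fin 3)) (v : Fin 3 → F) :
    mm σ v = (Equiv.Perm.permMatrix F σ⁻¹) * Matrix.diagonal v := by
  ext i j
  rw [mm_apply, Matrix.mul_diagonal, Equiv.Perm.permMatrix, PEquiv.toMatrix]
  simp only [Matrix.of_apply, Equiv.toPEquiv_apply, Option.mem_def, Option.some.injEq]
  by_cases h : i = σ j
  · simp [h]
  · have : ¬ σ.symm i = j := fun hh => h (by simp [← hh])
    simp [h, this]

lemma det_mm (σ : Equiv.Perm (Fin 3)) (v : Fin 3 → F) (hσ : Equiv.Perm.sign σ = 1) :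
    (mm σ v).det = v 0 * v 1 * v 2 := by
  rw [mm_eq_perm_mul, Matrix.det_mul, Matrix.det_permutation, Matrix.det_diagonal,
    map_inv, hσ, Fin.prod_univ_three]
  simp

abbrev ρ : Equiv.Perm (Fin 3) := finRotate 3

lemma sign_rho_pow (m : ℕ) : Equiv.Perm.sign (ρ ^ m) = 1 := by
  rw [map_pow, show Equiv.Perm.sign ρ = 1 from by decide, one_pow]

lemma rho_pow_zero_inj : ∀ m m' : ℕ, m < 3 → m' < 3 →
    (ρ ^ m) 0 = (ρ ^ m') 0 → m = m' := by
  intro m m' hm hm'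
  interval_cases m <;> interval_cases m' <;> simp <;> decide

def D (F : Type) [Field F] : Subgroup (Matrix.SpecialLinearGroup (Fin 3) F) where
  carrier := {g | ∃ σ ∈ Subgroup.zpowers (ρ), ∃ v : Fin 3 → F,
      (∀ i, v i ^ 3 = 1) ∧ (g : Matrix (Fin 3) (Fin 3) F) = mm σ v}
  one_mem' := by
    refine ⟨1, one_mem _, fun _ => 1, fun i => one_pow 3, ?_⟩
    ext i j
    rw [Matrix.SpecialLinearGroup.coe_one, mm_apply, Matrix.one_apply]
    by_cases h : i = j <;> simp [h]
  mul_mem' := by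
    rintro a b ⟨σ, hσ, v, hv, hva⟩ ⟨τ, hτ, w, hw, hwb⟩
    refine ⟨σ * τ, mul_mem hσ hτ, fun j => v (τ j) * w j,
      fun i => by rw [mul_pow, hv, hw, one_mul], ?_⟩
    rw [Matrix.SpecialLinearGroup.coe_mul, hva, hwb, mm_mul]
  inv_mem' := by
    rintro a ⟨σ, hσ, v, hv, hva⟩
    have hvne : ∀ i, v i ≠ 0 := by
      intro i h
      have := hv i
      rw [h] at this
      simp at this
    refine ⟨σ⁻¹, inv_mem hσ, fun j => (v (σ⁻¹ j))⁻¹,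
      fun i => by rw [inv_pow, hv, inv_one], ?_⟩
    have hmul : (a : Matrix (Fin 3) (Fin 3) F) * mm σ⁻¹ (fun j => (v (σ⁻¹ j))⁻¹) = 1 := by
      rw [hva, mm_mul, mul_inv_cancel]
      ext i j
      rw [mm_apply, Matrix.one_apply]
      by_cases h : i = j
      · simp [h, mul_inv_cancel₀ (hvne (σ.symm j))]
      · simp [h]
    have hinv : (a⁻¹ : Matrix.SpecialLinearGroup (Fin 3) F).1 * (a : Matrix (Fin 3) (Fin 3) F) = 1 := by
      rw [← Matrix.SpecialLinearGroup.coe_mul, inv_mul_cancel,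
        Matrix.SpecialLinearGroup.coe_one]
    calc (a⁻¹ : Matrix.SpecialLinearGroup (Fin 3) F).1
        = (a⁻¹ : Matrix.SpecialLinearGroup (Fin 3) F).1 *
          ((a : Matrix (Fin 3) (Fin 3) F) * mm σ⁻¹ (fun j => (v (σ⁻¹ j))⁻¹)) := by
          rw [hmul, mul_one]
      _ = mm σ⁻¹ (fun j => (v (σ⁻¹ j))⁻¹) := by rw [← mul_assoc, hinv, one_mul]

lemma monomial_of_mem_D (g : Matrix.SpecialLinearGroup (Fin 3) F) (hg : g ∈ D F) :
    (∀ i, ∃! j, (g : Matrix (Fin 3) (Fin 3) F) i j ≠ 0) ∧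
    (∀ j, ∃! i, (g : Matrix (Fin 3) (Fin 3) F) i j ≠ 0) := by
  obtain ⟨σ, -, v, hv, hgv⟩ := hg
  have hvne : ∀ i, v i ≠ 0 := by
    intro i h
    have := hv i
    rw [h] at this
    simp at this
  rw [hgv]
  constructor
  · intro i
    refine ⟨σ⁻¹ i, ?_, ?_⟩
    · show mm σ v i (σ⁻¹ i) ≠ 0
      rw [mm_apply]
      simp [hvne]
    · intro j hj
      replace hj : mm σ v i j ≠ 0 := hj
      rw [mm_apply] at hj
      by_cases h : i = σ j
      · rw [h]; simp
      · simp [h] at hj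
  · intro j
    refine ⟨σ j, ?_, ?_⟩
    · show mm σ v (σ j) j ≠ 0
      rw [mm_apply]; simp [hvne]
    · intro i hi
      replace hi : mm σ v i j ≠ 0 := hi
      rw [mm_apply] at hi
      by_cases h : i = σ j
      · exact h
      · simp [h] at hi

lemma fact3 {n : ℕ} (h3 : 3 ∣ n) (h9 : ¬ 9 ∣ n) : n.factorization 3 = 1 := by
  have hn : n ≠ 0 := by rintro rfl; exact h9 (dvd_zero 9)
  have h1 : 1 ≤ n.factorization 3 :=
    (Nat.Prime.pow_dvd_iff_le_factorization Nat.prime_three hn).1 (by simpa using h3)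
  have h2 : ¬ 2 ≤ n.factorization 3 := by
    intro h
    exact h9 (by simpa using (Nat.Prime.pow_dvd_iff_le_factorization Nat.prime_three hn).2 h)
  omega

lemma arith (q : ℕ) (hq : q % 9 = 4 ∨ q % 9 = 7) (N : ℕ)
    (hN : N * (q - 1) = (q ^ 3 - 1) * ((q ^ 3 - q) * (q ^ 3 - q ^ 2))) :
    N.factorization 3 = 3 := by
  obtain ⟨k, rfl⟩ : ∃ k, q = k + 1 := ⟨q - 1, by omega⟩
  set q := k + 1 with hqdef
  have hk9 : k % 9 = 3 ∨ k % 9 = 6 := by omega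
  have hk3 : 3 ∣ k := by omega
  have hk9' : ¬ 9 ∣ k := by omega
  have hkpos : 0 < k := by omega
  -- subtraction-free identities
  have e1 : q ^ 3 - 1 = k * (q ^ 2 + q + 1) := by
    have : q ^ 3 = k * (q ^ 2 + q + 1) + 1 := by rw [hqdef]; ring
    omega
  have e2 : q ^ 3 - q = q * (k * (q + 1)) := by
    have : q ^ 3 = q * (k * (q + 1)) + q := by rw [hqdef]; ring
    omega
  have e3 : q ^ 3 - q ^ 2 = q ^ 2 * k := by
    have : q ^ 3 = q ^ 2 * k + q ^ 2 := by rw [hqdef]; ring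
    omega
  have hq1 : q - 1 = k := by omega
  rw [hq1, e1, e2, e3] at hN
  have hNval : N = k ^ 2 * ((q ^ 2 + q + 1) * q ^ 3 * (q + 1)) := by
    have : N * k = (k ^ 2 * ((q ^ 2 + q + 1) * q ^ 3 * (q + 1))) * k := by
      rw [hN]; ring
    exact Nat.eq_of_mul_eq_mul_right hkpos this
  have hqq : (q ^ 2 + q + 1) % 9 = 3 := by
    obtain ⟨t, ht⟩ : ∃ t, q = 9 * t + 4 ∨ q = 9 * t + 7 := ⟨q / 9, by omega⟩
    rcases ht with ht | ht
    · have : q ^ 2 + q + 1 = 9 * (9 * t ^ 2 + 9 * t + 2) + 3 := by rw [ht]; ring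
      omega
    · have : q ^ 2 + q + 1 = 9 * (9 * t ^ 2 + 15 * t + 6) + 3 := by rw [ht]; ring
      omega
  have hq3 : ¬ (3 : ℕ) ∣ q := by omega
  have hq13 : ¬ (3 : ℕ) ∣ (q + 1) := by omega
  have hne1 : (q ^ 2 + q + 1) ≠ 0 := by positivity
  have hne2 : (q:ℕ) ^ 3 ≠ 0 := by positivity
  have hne3 : (q + 1) ≠ 0 := by omega
  rw [hNval, Nat.factorization_mul (by positivity) (by positivity),
    Nat.factorization_mul (by positivity) hne3,
    Nat.factorization_mul hne1 hne2, Nat.factorization_pow, Nat.factorization_pow]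
  simp only [Finsupp.coe_add, Finsupp.coe_smul, Pi.add_apply, Pi.smul_apply, smul_eq_mul]
  rw [fact3 hk3 hk9', fact3 (by omega) (by omega),
    Nat.factorization_eq_zero_of_not_dvd hq3, Nat.factorization_eq_zero_of_not_dvd hq13]
  norm_num

lemma card_SL (F : Type) [Field F] [Fintype F] :
    Nat.card (Matrix.SpecialLinearGroup (Fin 3) F) * (Fintype.card F - 1)
      = (Fintype.card F ^ 3 - 1) * ((Fintype.card F ^ 3 - Fintype.card F)
        * (Fintype.card F ^ 3 - Fintype.card F ^ 2)) := by
  classical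
  set d := Matrix.GeneralLinearGroup.det (n := Fin 3) (R := F) with hd
  have hsurj : Function.Surjective d := by
    intro u
    have hmul : Matrix.diagonal ![(u:F),1,1] * Matrix.diagonal ![((u⁻¹:Fˣ):F),1,1] = 1 := by
      rw [Matrix.diagonal_mul_diagonal,
        show (fun i => ![(u:F),1,1] i * ![((u⁻¹:Fˣ):F),1,1] i) = (fun _ => (1:F)) from
          funext fun i => by fin_cases i <;> simp, Matrix.diagonal_one]
    have hmul' : Matrix.diagonal ![((u⁻¹:Fˣ):F),1,1] * Matrix.diagonal ![(u:F),1,1] = 1 := by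
      rw [Matrix.diagonal_mul_diagonal,
        show (fun i => ![((u⁻¹:Fˣ):F),1,1] i * ![(u:F),1,1] i) = (fun _ => (1:F)) from
          funext fun i => by fin_cases i <;> simp, Matrix.diagonal_one]
    refine ⟨⟨Matrix.diagonal ![(u:F),1,1], Matrix.diagonal ![((u⁻¹:Fˣ):F),1,1], hmul, hmul'⟩, ?_⟩
    apply Units.ext
    show (Matrix.diagonal ![(u:F),1,1]).det = (u : F)
    rw [Matrix.det_diagonal, Fin.prod_univ_three]
    simp
  have e : MonoidHom.ker d ≃ Matrix.SpecialLinearGroup (Fin 3) F := by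
    refine ⟨fun g => ⟨((g : GL (Fin 3) F) : Matrix (Fin 3) (Fin 3) F), ?_⟩,
      fun s => ⟨Matrix.SpecialLinearGroup.toGL s, Matrix.SpecialLinearGroup.coeToGL_det s⟩,
      fun g => ?_, fun s => ?_⟩
    · have hg := g.2
      rw [MonoidHom.mem_ker] at hg
      have := congrArg (fun (u : Fˣ) => (u : F)) hg
      simpa [hd, Matrix.GeneralLinearGroup.val_det_apply] using this
    · exact Subtype.ext (Units.ext rfl)
    · exact Subtype.ext rfl
  have h1 : Nat.card (GL (Fin 3) F)
      = Nat.card (GL (Fin 3) F ⧸ MonoidHom.ker d) * Nat.card (MonoidHom.ker d) :=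
    Subgroup.card_eq_card_quotient_mul_card_subgroup _
  have h2 : Nat.card (GL (Fin 3) F ⧸ MonoidHom.ker d) = Nat.card Fˣ :=
    Nat.card_congr (QuotientGroup.quotientKerEquivOfSurjective d hsurj).toEquiv
  have h3 : Nat.card (MonoidHom.ker d) = Nat.card (Matrix.SpecialLinearGroup (Fin 3) F) :=
    Nat.card_congr e
  have h4 : Nat.card Fˣ = Fintype.card F - 1 := by
    rw [Nat.card_eq_fintype_card, Fintype.card_units]
  have h5 := Matrix.card_GL_field (𝔽 := F) 3
  rw [Fin.prod_univ_three] at h5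
  rw [h2, h3, h4] at h1
  rw [mul_comm] at h1
  rw [← h1, h5]
  norm_num [mul_assoc]

lemma card_D [Fintype F] (ζ : Fˣ) (hζ : orderOf ζ = 3) : Nat.card (D F) = 27 := by
  classical
  have hpow3 : ∀ a : rootsOfUnity 3 F, ((a : Fˣ) : F) ^ 3 = 1 := by
    intro a
    have h := (mem_rootsOfUnity 3 (a : Fˣ)).1 a.2
    have := congrArg (fun u : Fˣ => (u : F)) h
    simpa using this
  have hune : ∀ a : rootsOfUnity 3 F, ((a : Fˣ) : F) ≠ 0 := fun a => Units.ne_zero _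
  -- the vector
  let vv : rootsOfUnity 3 F → rootsOfUnity 3 F → (Fin 3 → F) := fun a b =>
    ![((a : Fˣ) : F), ((b : Fˣ) : F), ((((a : Fˣ) * (b : Fˣ))⁻¹ : Fˣ) : F)]
  have hvv3 : ∀ a b i, vv a b i ^ 3 = 1 := by
    intro a b i
    fin_cases i
    · exact hpow3 a
    · exact hpow3 b
    · show ((((a : Fˣ) * (b : Fˣ))⁻¹ : Fˣ) : F) ^ 3 = 1
      rw [← Units.val_pow_eq_pow_val, inv_pow, mul_pow]
      have ha := (mem_rootsOfUnity 3 (a : Fˣ)).1 a.2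
      have hb := (mem_rootsOfUnity 3 (b : Fˣ)).1 b.2
      rw [ha, hb, one_mul, inv_one, Units.val_one]
  have hdet : ∀ (k : ZMod 3) (a b : rootsOfUnity 3 F),
      (mm (ρ ^ (k.val)) (vv a b)).det = 1 := by
    intro k a b
    rw [det_mm _ _ (sign_rho_pow _)]
    show ((a : Fˣ) : F) * ((b : Fˣ) : F) * ((((a : Fˣ) * (b : Fˣ))⁻¹ : Fˣ) : F) = 1
    rw [← Units.val_mul, ← Units.val_mul, mul_inv_cancel, Units.val_one]
  let f : ZMod 3 × rootsOfUnity 3 F × rootsOfUnity 3 F → (D F) := fun x =>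
    ⟨⟨mm (ρ ^ (x.1.val)) (vv x.2.1 x.2.2), hdet x.1 x.2.1 x.2.2⟩,
      ⟨ρ ^ (x.1.val), ⟨(x.1.val : ℤ), zpow_natCast ρ x.1.val⟩, vv x.2.1 x.2.2,
        hvv3 x.2.1 x.2.2, rfl⟩⟩
  have hbij : Function.Bijective f := by
    constructor
    · rintro ⟨k, a, b⟩ ⟨k', a', b'⟩ h
      have hM : mm (ρ ^ (k.val)) (vv a b) = mm (ρ ^ (k'.val)) (vv a' b') :=
        congrArg (fun (x : D F) => ((x : Matrix.SpecialLinearGroup (Fin 3) F) :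
          Matrix (Fin 3) (Fin 3) F)) h
      have hkk' : k = k' := by
        have h0 := congrFun (congrFun hM ((ρ ^ (k.val)) 0)) 0
        rw [mm_apply, mm_apply, if_pos rfl] at h0
        by_cases hc : (ρ ^ (k.val)) 0 = (ρ ^ (k'.val)) 0
        · exact ZMod.val_injective 3 (rho_pow_zero_inj _ _ (ZMod.val_lt k) (ZMod.val_lt k') hc)
        · rw [if_neg hc] at h0
          exact absurd h0 (hune a)
      subst hkk'
      have hveq : ∀ j : Fin 3, vv a b j = vv a' b' j := by
        intro j
        have h0 := congrFun (congrFun hM ((ρ ^ (k.val)) j)) j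
        rwa [mm_apply, mm_apply, if_pos rfl, if_pos rfl] at h0
      have ha : a = a' := Subtype.ext (Units.ext (hveq 0))
      have hb : b = b' := Subtype.ext (Units.ext (hveq 1))
      rw [ha, hb]
    · rintro ⟨g, hg⟩
      obtain ⟨σ, hσ, v, hv, hgv⟩ := hg
      obtain ⟨m, hm0⟩ := mem_powers_iff_mem_zpowers.2 hσ
      have hm : ρ ^ m = σ := hm0
      have hρ3 : ρ ^ 3 = 1 := by decide
      have hred : ρ ^ (m % 3) = σ := by
        rw [← hm]
        conv_rhs => rw [show m = m % 3 + 3 * (m / 3) from (Nat.mod_add_div m 3).symm]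
        rw [pow_add, pow_mul, hρ3, one_pow, mul_one]
      set k : ZMod 3 := (m : ZMod 3) with hk
      have hkval : k.val = m % 3 := ZMod.val_natCast 3 m
      have hvne : ∀ i, v i ≠ 0 := by
        intro i h
        have := hv i
        rw [h] at this
        simp at this
      -- units from the entries
      have hmkmem : ∀ i : Fin 3, (Units.mk0 (v i) (hvne i)) ∈ rootsOfUnity 3 F := by
        intro i
        rw [mem_rootsOfUnity]
        apply Units.ext
        rw [Units.val_pow_eq_pow_val]
        simpa using hv i
      set ua : rootsOfUnity 3 F := ⟨Units.mk0 (v 0) (hvne 0), hmkmem 0⟩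
      set ub : rootsOfUnity 3 F := ⟨Units.mk0 (v 1) (hvne 1), hmkmem 1⟩
      have hdetg : v 0 * v 1 * v 2 = 1 := by
        rw [← det_mm σ v (by rw [← hred]; exact sign_rho_pow _), ← hgv]
        exact g.2
      have hv2 : v 2 = (v 0 * v 1)⁻¹ := by
        have h10 : v 0 * v 1 ≠ 0 := mul_ne_zero (hvne 0) (hvne 1)
        exact eq_inv_of_mul_eq_one_left (by rw [mul_comm]; exact hdetg)
      refine ⟨(k, ua, ub), ?_⟩
      apply Subtype.ext
      apply Subtype.ext
      show mm (ρ ^ (k.val)) (vv ua ub) = g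
      rw [hgv, hkval, hred]
      have hvveq : vv ua ub = v := by
        funext i
        fin_cases i
        · rfl
        · rfl
        · show ((((ua : Fˣ) * (ub : Fˣ))⁻¹ : Fˣ) : F) = v 2
          rw [Units.val_inv_eq_inv_val, hv2]
          rfl
      rw [hvveq]
  have hcard := Nat.card_eq_of_bijective f hbij
  have hprim : IsPrimitiveRoot ζ 3 := hζ ▸ IsPrimitiveRoot.orderOf ζ
  have hR : Nat.card (rootsOfUnity 3 F) = 3 := by
    rw [hprim.card_rootsOfUnity']
  rw [← hcard, Nat.card_prod, Nat.card_prod, hR, Nat.card_zmod]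

lemma centralizer_le_D (ω : F) (hω3 : ω ^ 3 = 1) (hω1 : ω ≠ 1) :
    Subgroup.centralizer ((D F : Subgroup (Matrix.SpecialLinearGroup (Fin 3) F)) : Set _)
      ≤ D F := by
  have hω21 : ω ^ 2 ≠ 1 := by
    intro h
    apply hω1
    have := hω3
    rw [pow_succ, h, one_mul] at this
    exact this
  have hωsq : ω ≠ ω ^ 2 := by
    intro h
    apply hω21
    have h23 : ω ^ 2 = ω ^ 3 := by
      calc ω ^ 2 = ω * ω := sq ω
        _ = ω * ω ^ 2 := by nth_rewrite 2 [h]; rfl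
        _ = ω ^ 3 := (pow_succ' ω 2).symm
    exact h23.trans hω3
  have h1ω : (1 : F) ≠ ω := Ne.symm hω1
  have h1ω2 : (1 : F) ≠ ω ^ 2 := Ne.symm hω21
  have hwne : ∀ i j : Fin 3, i ≠ j →
      (![1, ω, ω ^ 2] : Fin 3 → F) i ≠ (![1, ω, ω ^ 2] : Fin 3 → F) j := by
    intro i j hij
    fin_cases i <;> fin_cases j <;>
      simp only [Matrix.cons_val_zero, Matrix.cons_val_one, Matrix.head_cons,
        Matrix.cons_val_two, Matrix.tail_cons] <;>
      first
        | exact absurd rfl hij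
        | exact h1ω
        | exact h1ω2
        | exact hω1
        | exact hωsq
        | exact Ne.symm h1ω2
        | exact Ne.symm hωsq
  -- the two test elements
  have hsign1 : Equiv.Perm.sign (1 : Equiv.Perm (Fin 3)) = 1 := map_one _
  have hsignρ : Equiv.Perm.sign (ρ : Equiv.Perm (Fin 3)) = 1 := by decide
  have hω23 : (ω ^ 2) ^ 3 = 1 := by
    rw [← pow_mul, show 2 * 3 = 3 * 2 from rfl, pow_mul, hω3, one_pow]
  have hdetd : (mm 1 ![1, ω, ω ^ 2] : Matrix (Fin 3) (Fin 3) F).det = 1 := by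
    rw [det_mm _ _ hsign1]
    show (1 : F) * ω * ω ^ 2 = 1
    rw [one_mul, ← pow_succ' ω 2, hω3]
  have hdetc : (mm ρ (fun _ => (1 : F)) : Matrix (Fin 3) (Fin 3) F).det = 1 := by
    rw [det_mm _ _ hsignρ]
    show (1 : F) * 1 * 1 = 1
    norm_num
  set dd : Matrix.SpecialLinearGroup (Fin 3) F := ⟨mm 1 ![1, ω, ω ^ 2], hdetd⟩ with hdd
  set cc : Matrix.SpecialLinearGroup (Fin 3) F := ⟨mm ρ (fun _ => (1 : F)), hdetc⟩ with hcc
  have hddD : dd ∈ D F := by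
    refine ⟨1, one_mem _, ![1, ω, ω ^ 2], ?_, rfl⟩
    intro i
    fin_cases i
    · show (1 : F) ^ 3 = 1; rw [one_pow]
    · exact hω3
    · exact hω23
  have hccD : cc ∈ D F := by
    exact ⟨ρ, Subgroup.mem_zpowers _, fun _ => (1 : F), fun i => one_pow 3, rfl⟩
  intro g hg
  rw [Subgroup.mem_centralizer_iff] at hg
  have h1 := hg dd hddD
  have h2 := hg cc hccD
  have hM1 : mm 1 ![1, ω, ω ^ 2] * (g : Matrix (Fin 3) (Fin 3) F)
      = (g : Matrix (Fin 3) (Fin 3) F) * mm 1 ![1, ω, ω ^ 2] := by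
    have := congrArg (fun x : Matrix.SpecialLinearGroup (Fin 3) F =>
      (x : Matrix (Fin 3) (Fin 3) F)) h1
    exact this
  have hM2 : mm ρ (fun _ => (1 : F)) * (g : Matrix (Fin 3) (Fin 3) F)
      = (g : Matrix (Fin 3) (Fin 3) F) * mm ρ (fun _ => (1 : F)) := by
    have := congrArg (fun x : Matrix.SpecialLinearGroup (Fin 3) F =>
      (x : Matrix (Fin 3) (Fin 3) F)) h2
    exact this
  set M : Matrix (Fin 3) (Fin 3) F := (g : Matrix (Fin 3) (Fin 3) F) with hMdef
  have hoff : ∀ i j, i ≠ j → M i j = 0 := by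
    intro i j hij
    have h0 := congrFun (congrFun hM1 i) j
    rw [mm_one, Matrix.diagonal_mul, Matrix.mul_diagonal] at h0
    have hz : M i j * ((![1, ω, ω ^ 2] : Fin 3 → F) i - (![1, ω, ω ^ 2] : Fin 3 → F) j) = 0 := by
      linear_combination h0
    rcases mul_eq_zero.1 hz with h | h
    · exact h
    · exact absurd (sub_eq_zero.1 h) (hwne i j hij)
  have hMdiag : M = mm 1 (fun i => M i i) := by
    ext i j
    rw [mm_apply]
    by_cases h : i = j
    · subst h
      simp
    · have : ¬ i = (1 : Equiv.Perm (Fin 3)) j := h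
      rw [if_neg this]
      exact hoff i j h
  have hMM : mm ρ (fun _ => (1 : F)) * mm 1 (fun i => M i i)
      = mm 1 (fun i => M i i) * mm ρ (fun _ => (1 : F)) := by
    rw [← hMdiag]
    exact hM2
  rw [mm_mul, mm_mul] at hMM
  have hu : ∀ j : Fin 3, M (ρ j) (ρ j) = M j j := by
    intro j
    have h0 := congrFun (congrFun hMM ((ρ * 1) j)) j
    rw [mm_apply, mm_apply, if_pos rfl, if_pos (show (ρ * 1) j = (1 * ρ) j from rfl)] at h0
    simpa using h0.symm
  have hu1 : M 1 1 = M 0 0 := by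
    have := hu 0
    rwa [show ρ 0 = 1 from by decide] at this
  have hu2 : M 2 2 = M 1 1 := by
    have := hu 1
    rwa [show ρ 1 = 2 from by decide] at this
  have hconst : (fun i => M i i) = fun _ => M 0 0 := by
    funext i
    fin_cases i
    · rfl
    · exact hu1
    · exact hu2.trans hu1
  have ha3 : (M 0 0) ^ 3 = 1 := by
    have hdet : M.det = 1 := g.2
    rw [hMdiag, hconst, det_mm _ _ hsign1] at hdet
    calc (M 0 0) ^ 3 = M 0 0 * M 0 0 * M 0 0 := by ring
      _ = 1 := hdet
  have hfinal : M = mm 1 (fun _ => M 0 0) := by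
    conv_lhs => rw [hMdiag, hconst]
  exact ⟨1, one_mem _, fun _ => M 0 0, fun i => ha3, hfinal⟩

end SL3Proof

/-- A matrix is monomial if it has exactly one nonzero entry in each row and column. -/
def IsMonomial {F : Type} [Field F] (M : Matrix (Fin 3) (Fin 3) F) : Prop :=
  (∀ i, ∃! j, M i j ≠ 0) ∧ (∀ j, ∃! i, M i j ≠ 0)

/-- Let `q` be a prime power with `q ≡ 4` or `7 (mod 9)` and `G = SL₃(F_q)`. Then a Sylow
3-subgroup `D` of `G` may be chosen inside the monomial matrices of determinant 1,
and it satisfies `C_G(D) ≤ D`. -/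
theorem sl3_sylow_three_monomial_self_centralizing (F : Type) [Field F] [Fintype F]
    (hq : Fintype.card F % 9 = 4 ∨ Fintype.card F % 9 = 7) :
    ∃ P : Sylow 3 (Matrix.SpecialLinearGroup (Fin 3) F),
      (∀ g : Matrix.SpecialLinearGroup (Fin 3) F, g ∈ (P : Subgroup _) →
        IsMonomial (g : Matrix (Fin 3) (Fin 3) F)) ∧
      Subgroup.centralizer ((P : Subgroup (Matrix.SpecialLinearGroup (Fin 3) F)) : Set _)
        ≤ (P : Subgroup (Matrix.SpecialLinearGroup (Fin 3) F)) := by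
  classical
  haveI : Fact (Nat.Prime 3) := ⟨by norm_num⟩
  have h2card : 2 ≤ Fintype.card F := Fintype.one_lt_card
  have hq3 : 3 ∣ Fintype.card Fˣ := by
    rw [Fintype.card_units]
    omega
  obtain ⟨ζ, hζ⟩ := exists_prime_orderOf_dvd_card (G := Fˣ) 3 hq3
  have hω3 : ((ζ : F)) ^ 3 = 1 := by
    have h := congrArg (fun u : Fˣ => (u : F)) (hζ ▸ pow_orderOf_eq_one ζ)
    simpa using h
  have hω1 : ((ζ : F)) ≠ 1 := by
    intro h
    have : ζ = 1 := Units.ext (by simpa using h)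
    rw [this, orderOf_one] at hζ
    norm_num at hζ
  have hcardD : Nat.card (SL3Proof.D F) = 27 := SL3Proof.card_D ζ hζ
  have hfact : (Nat.card (Matrix.SpecialLinearGroup (Fin 3) F)).factorization 3 = 3 :=
    SL3Proof.arith (Fintype.card F) hq _ (SL3Proof.card_SL F)
  refine ⟨Sylow.ofCard (SL3Proof.D F) (by rw [hcardD, hfact]; norm_num), ?_, ?_⟩
  · intro g hg
    exact SL3Proof.monomial_of_mem_D g hg
  · exact SL3Proof.centralizer_le_D (ζ : F) hω3 hω1
end

section
/- Let G̃ be a finite group, J ⊴ G̃, G ≤ J normal in G̃, ℓ a prime, B an ℓ-block of J with defect group D. If C_{G̃}(C_J(D)_{ℓ'}) · G = G̃, where C_J(D)_{ℓ'} denotes the set of ℓ-regular elements of C_J(D), then B is G̃-stable, i.e., B^g = B for all g ∈ G̃. -/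
/-- `e` is a block idempotent of the group algebra `k[G]`: a nonzero primitive idempotent
of the center of `k[G]`. -/
def IsBlockIdem (k : Type) [Field k] (G : Type) [Group G] (e : MonoidAlgebra k G) : Prop :=
  e ∈ Subalgebra.center k (MonoidAlgebra k G) ∧ e * e = e ∧ e ≠ 0 ∧
    ∀ f : MonoidAlgebra k G, f ∈ Subalgebra.center k (MonoidAlgebra k G) → f * f = f →
      e * f = f → f = 0 ∨ f = e

/-- The Brauer homomorphism with respect to `Q` (truncation of the coefficients to the
centralizer `C_G(Q)`) does not vanish on `e`. -/
def BrauerNonzero {k : Type} [Field k] {G : Type} [Group G]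
    (Q : Subgroup G) (e : MonoidAlgebra k G) : Prop :=
  ∃ g ∈ Subgroup.centralizer (Q : Set G), e.coeff g ≠ 0

/-- `D` is a defect group of the block `e`: an `ℓ`-subgroup maximal among `ℓ`-subgroups
on which the Brauer homomorphism does not kill `e`. -/
def IsDefectGroup {k : Type} [Field k] {G : Type} [Group G]
    (ℓ : ℕ) (e : MonoidAlgebra k G) (D : Subgroup G) : Prop :=
  IsPGroup ℓ ↥D ∧ BrauerNonzero D e ∧
    ∀ Q : Subgroup G, IsPGroup ℓ ↥Q → BrauerNonzero Q e → D ≤ Q → Q = D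

/-- The conjugation action of `g ∈ G̃` on the group algebra of a normal subgroup `J`. -/
noncomputable def conjBlock {k : Type} [Field k] {Gt : Type} [Group Gt]
    (J : Subgroup Gt) [hJ : J.Normal] (g : Gt)
    (e : MonoidAlgebra k ↥J) : MonoidAlgebra k ↥J :=
  MonoidAlgebra.ofCoeff
    (Finsupp.mapDomain (fun x : ↥J => (⟨g * ↑x * g⁻¹, hJ.conj_mem ↑x x.2 g⟩ : ↥J)) e.coeff)

open scoped Classical in
open MulAction in
theorem sum_invariant_eq_sum_fixed {X : Type} [Fintype X] {G : Type} [Group G] [Finite G]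
    {p : ℕ} [Fact p.Prime] {k : Type} [Field k] [CharP k p] (hG : IsPGroup p G)
    (φ : G →* Equiv.Perm X) (f : X → k) (hf : ∀ g x, f (φ g x) = f x) :
    ∑ x, f x = ∑ x ∈ Finset.univ.filter (fun x => ∀ g : G, φ g x = x), f x := by
  classical
  letI : MulAction G X := MulAction.compHom X φ
  have hsmul : ∀ (g : G) (x : X), g • x = φ g x := fun g x => rfl
  haveI : Fintype (orbitRel.Quotient G X) := Fintype.ofFinite _
  rw [← Finset.sum_fiberwise Finset.univ (fun x => (Quotient.mk'' x : orbitRel.Quotient G X)) f]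
  have hfiber : ∀ (ω : orbitRel.Quotient G X) (x : X),
      (Quotient.mk'' x : orbitRel.Quotient G X) = ω ↔ x ∈ orbit G ω.out := by
    intro ω x
    conv_lhs => rw [← Quotient.out_eq' ω]
    rw [Quotient.eq'']
    exact MulAction.orbitRel_apply (G := G)
  have hconst : ∀ (ω : orbitRel.Quotient G X), ∀ x ∈ orbit G ω.out, f x = f ω.out := by
    intro ω x hx
    obtain ⟨g, hg⟩ := MulAction.mem_orbit_iff.mp hx
    rw [← hg, hsmul, hf]
  obtain ⟨n, hn⟩ := IsPGroup.iff_card.mp hG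
  have hcard : ∀ ω : orbitRel.Quotient G X,
      (Finset.univ.filter (fun x => (Quotient.mk'' x : orbitRel.Quotient G X) = ω)).card
        = Nat.card (orbit G ω.out) := by
    intro ω
    rw [Nat.card_eq_fintype_card, Fintype.card_subtype]
    congr 1
    ext x
    simp [hfiber ω x]
  have hkey : ∀ ω : orbitRel.Quotient G X,
      ∑ x ∈ Finset.univ.filter (fun x => (Quotient.mk'' x : orbitRel.Quotient G X) = ω), f x
        = if (∀ g : G, φ g ω.out = ω.out) then f ω.out else 0 := by
    intro ω
    have hsum : ∑ x ∈ Finset.univ.filter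
        (fun x => (Quotient.mk'' x : orbitRel.Quotient G X) = ω), f x
        = Nat.card (orbit G ω.out) • f ω.out := by
      rw [← hcard ω, ← Finset.sum_const]
      apply Finset.sum_congr rfl
      intro x hx
      exact hconst ω x ((hfiber ω x).mp (Finset.mem_filter.mp hx).2)
    rw [hsum]
    by_cases hfix : ∀ g : G, φ g ω.out = ω.out
    · rw [if_pos hfix]
      have horb : orbit G ω.out = {ω.out} := by
        apply Set.eq_singleton_iff_unique_mem.mpr
        refine ⟨MulAction.mem_orbit_self _, ?_⟩
        intro x hx
        obtain ⟨g, hg⟩ := MulAction.mem_orbit_iff.mp hx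
        rw [← hg, hsmul, hfix]
      rw [horb]
      simp
    · rw [if_neg hfix]
      have hdvd : Nat.card (orbit G ω.out) ∣ p ^ n := by
        rw [← hn, Nat.card_congr (MulAction.orbitEquivQuotientStabilizer G ω.out)]
        exact Subgroup.card_quotient_dvd_card _
      obtain ⟨m, hm, hcm⟩ := (Nat.dvd_prime_pow Fact.out).mp hdvd
      have hm1 : m ≠ 0 := by
        intro h0
        rw [h0, pow_zero] at hcm
        apply hfix
        intro g
        have h1 : Subsingleton (orbit G ω.out) := (Nat.card_eq_one_iff_unique.mp hcm).1
        have e1 : (⟨_, MulAction.mem_orbit ω.out g⟩ : orbit G ω.out)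
            = ⟨ω.out, MulAction.mem_orbit_self _⟩ := Subsingleton.elim _ _
        have e2 := congrArg Subtype.val e1
        rw [← hsmul]
        exact e2
      have hcast : ((Nat.card (orbit G ω.out) : k)) = 0 := by
        rw [hcm, CharP.cast_eq_zero_iff k p]
        exact dvd_pow_self p hm1
      rw [nsmul_eq_mul, hcast, zero_mul]
  rw [Finset.sum_congr rfl (fun ω _ => hkey ω)]
  rw [Finset.sum_ite, Finset.sum_const, smul_zero, add_zero]
  have hout : ∀ x : X, (∀ g : G, φ g x = x) → (Quotient.mk'' x : orbitRel.Quotient G X).out = x := by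
    intro x hx
    have hmem : (Quotient.mk'' x : orbitRel.Quotient G X).out ∈ orbit G x := by
      rw [← MulAction.orbitRel_apply (G := G), ← Quotient.eq'']
      exact Quotient.out_eq' _
    obtain ⟨g', hg'⟩ := MulAction.mem_orbit_iff.mp hmem
    rw [← hg', hsmul, hx g']
  refine Finset.sum_nbij' (fun ω => Quotient.out ω)
    (fun x => (Quotient.mk'' x : orbitRel.Quotient G X)) ?_ ?_ ?_ ?_ ?_
  · intro ω hω
    simp only [Finset.mem_filter, Finset.mem_univ, true_and] at hω ⊢
    exact hω
  · intro x hx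
    simp only [Finset.mem_filter, Finset.mem_univ, true_and] at hx ⊢
    rw [hout x hx]
    exact hx
  · intro ω hω
    exact Quotient.out_eq' ω
  · intro x hx
    simp only [Finset.mem_filter, Finset.mem_univ, true_and] at hx
    exact hout x hx
  · intro ω hω
    rfl


section AuxZero
open scoped Classical

theorem sum_invariant_eq_zero {X : Type} [Fintype X] {G : Type} [Group G] [Finite G]
    {p : ℕ} [Fact p.Prime] {k : Type} [Field k] [CharP k p] (hG : IsPGroup p G)
    (φ : G →* Equiv.Perm X) (f : X → k) (hf : ∀ g x, f (φ g x) = f x)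
    (hfix : ∀ x, (∀ g : G, φ g x = x) → f x = 0) : ∑ x, f x = 0 := by
  rw [sum_invariant_eq_sum_fixed hG φ f hf]
  apply Finset.sum_eq_zero
  intro x hx
  exact hfix x (Finset.mem_filter.mp hx).2

end AuxZero

lemma conv_apply {k : Type} [Semiring k] {H : Type} [Group H] [Fintype H]
    (a b : MonoidAlgebra k H) (y : H) :
    (a * b).coeff y = ∑ u : H, a.coeff u * b.coeff (u⁻¹ * y) := by
  classical
  rw [MonoidAlgebra.mul_apply]
  rw [Finsupp.sum_fintype _ _ (fun u => by
    apply Finset.sum_eq_zero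
    intro v hv
    simp)]
  apply Finset.sum_congr rfl
  intro u _
  rw [Finsupp.sum_fintype _ _ (fun v => by simp)]
  have hcond : ∀ v : H, (if u * v = y then a.coeff u * b.coeff v else 0)
      = if v = u⁻¹ * y then a.coeff u * b.coeff v else 0 := by
    intro v
    congr 1
    simp [eq_inv_mul_iff_mul_eq]
  rw [Finset.sum_congr rfl (fun v _ => hcond v), Finset.sum_ite_eq' Finset.univ (u⁻¹ * y)]
  simp

open scoped Classical in
lemma ma_pow_apply {k : Type} [CommSemiring k] {H : Type} [Group H] [Fintype H]
    (f : MonoidAlgebra k H) (n : ℕ) (y : H) :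
    (f ^ n).coeff y = ∑ σ : Fin n → H,
      if (List.ofFn σ).prod = y then ∏ i, f.coeff (σ i) else 0 := by
  induction n generalizing y with
  | zero =>
    rw [pow_zero]
    rw [Fintype.sum_unique]
    have h0 : (List.ofFn (default : Fin 0 → H)) = [] := List.ofFn_zero
    rw [h0]
    simp only [List.prod_nil, Finset.univ_eq_empty, Finset.prod_empty]
    rw [MonoidAlgebra.one_def, MonoidAlgebra.coeff_single_apply]
  | succ n ih =>
    rw [pow_succ', conv_apply]
    have hstep : ∀ u : H, f.coeff u * (f ^ n).coeff (u⁻¹ * y)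
        = ∑ τ : Fin n → H, if (List.ofFn τ).prod = u⁻¹ * y then f.coeff u * ∏ i, f.coeff (τ i) else 0 := by
      intro u
      rw [ih, Finset.mul_sum]
      apply Finset.sum_congr rfl
      intro τ _
      rw [mul_ite, mul_zero]
    rw [Finset.sum_congr rfl (fun u _ => hstep u)]
    rw [← Equiv.sum_comp (Fin.consEquiv (fun _ : Fin (n+1) => H))]
    rw [Fintype.sum_prod_type]
    apply Finset.sum_congr rfl
    intro u _
    apply Finset.sum_congr rfl
    intro τ _
    have h1 : List.ofFn ((Fin.consEquiv (fun _ : Fin (n+1) => H)) (u, τ)) = u :: List.ofFn τ := by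
      rw [show ((Fin.consEquiv (fun _ : Fin (n+1) => H)) (u, τ)) = Fin.cons u τ from rfl]
      rw [List.ofFn_succ]
      simp [Fin.cons_zero, Fin.cons_succ]
    rw [h1, List.prod_cons]
    have h2 : ∏ i, f.coeff (((Fin.consEquiv (fun _ : Fin (n+1) => H)) (u, τ)) i)
        = f.coeff u * ∏ i, f.coeff (τ i) := by
      rw [show ((Fin.consEquiv (fun _ : Fin (n+1) => H)) (u, τ)) = Fin.cons u τ from rfl]
      rw [Fin.prod_univ_succ]
      simp [Fin.cons_zero, Fin.cons_succ]
    rw [h2]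
    have hcond : ((List.ofFn τ).prod = u⁻¹ * y) ↔ (u * (List.ofFn τ).prod = y) := by
      simp [eq_inv_mul_iff_mul_eq]
    simp only [hcond]

-- choice of q: ℓ-power killing the ℓ-part of every order
lemma q_choice {H : Type} [Group H] [Finite H] {ℓ : ℕ} (hℓ : ℓ.Prime) (g : H) :
    ¬ ℓ ∣ orderOf (g ^ (ℓ ^ Nat.card H)) := by
  have ha0 : orderOf g ≠ 0 := by
    have : 0 < orderOf g := orderOf_pos g
    omega
  set a := orderOf g with h_a
  set v := a.factorization ℓ with hv
  have hvN : ℓ ^ v ≤ ℓ ^ Nat.card H := by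
    calc ℓ ^ v ≤ a := Nat.le_of_dvd (Nat.pos_of_ne_zero ha0) (Nat.ordProj_dvd a ℓ)
    _ ≤ Nat.card H := Nat.le_of_dvd Nat.card_pos (orderOf_dvd_natCard g)
    _ ≤ ℓ ^ Nat.card H := le_of_lt (Nat.lt_pow_self hℓ.one_lt)
  have hvdvd : ℓ ^ v ∣ Nat.gcd a (ℓ ^ Nat.card H) :=
    Nat.dvd_gcd (Nat.ordProj_dvd a ℓ) (pow_dvd_pow ℓ (Nat.pow_le_pow_iff_right hℓ.one_lt |>.mp hvN))
  rw [orderOf_pow]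
  intro hdvd
  have hgcd_dvd : Nat.gcd a (ℓ ^ Nat.card H) ∣ a := Nat.gcd_dvd_left _ _
  have h1 : ℓ * Nat.gcd a (ℓ ^ Nat.card H) ∣ a := by
    obtain ⟨m, hm⟩ := hdvd
    refine ⟨m, ?_⟩
    have := Nat.div_mul_cancel hgcd_dvd
    calc a = a / Nat.gcd a (ℓ ^ Nat.card H) * Nat.gcd a (ℓ ^ Nat.card H) := this.symm
    _ = (ℓ * m) * Nat.gcd a (ℓ ^ Nat.card H) := by rw [← hm]
    _ = ℓ * Nat.gcd a (ℓ ^ Nat.card H) * m := by ring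
  have h2 : ℓ ^ (v + 1) ∣ a := by
    calc ℓ ^ (v + 1) = ℓ * ℓ ^ v := by ring
    _ ∣ ℓ * Nat.gcd a (ℓ ^ Nat.card H) := mul_dvd_mul_left ℓ hvdvd
    _ ∣ a := h1
  exact Nat.pow_succ_factorization_not_dvd ha0 hℓ h2

-- invariance under natural powers of a permutation
lemma perm_inv_nat {X : Type} {k : Type} (π : Equiv.Perm X) (F : X → k)
    (hF : ∀ x, F (π x) = F x) : ∀ (m : ℕ) (x : X), F ((π ^ m) x) = F x := by
  intro m
  induction m with
  | zero => intro x; rfl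
  | succ m ih =>
    intro x
    rw [pow_succ]
    have : ((π ^ m * π) x) = (π ^ m) (π x) := rfl
    rw [this, ih, hF]

lemma perm_inv_int {X : Type} {k : Type} (π : Equiv.Perm X) (F : X → k)
    (hF : ∀ x, F (π x) = F x) : ∀ (j : ℤ) (x : X), F ((π ^ j) x) = F x := by
  intro j x
  cases j with
  | ofNat m => rw [Int.ofNat_eq_coe, zpow_natCast]; exact perm_inv_nat π F hF m x
  | negSucc m =>
    rw [zpow_negSucc]
    have h1 : F ((π ^ (m + 1)) (((π ^ (m + 1))⁻¹) x)) = F (((π ^ (m + 1))⁻¹) x) :=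
      perm_inv_nat π F hF (m + 1) _
    have h2 : (π ^ (m + 1)) (((π ^ (m + 1))⁻¹) x) = x := by
      simp
    rw [h2] at h1
    exact h1.symm

-- (x*z)^(n+1) = x * (z*x)^n * z
lemma aux_pow_shift {H : Type} [Group H] (x z : H) (n : ℕ) :
    (x * z) ^ (n + 1) = x * (z * x) ^ n * z := by
  induction n with
  | zero => simp
  | succ n ih =>
    rw [pow_succ, ih, pow_succ]
    group

-- product of conjugate-telescoping list
lemma list_prod_conj {H : Type} [Group H] (z : H) (n : ℕ) (x : H) :
    (List.ofFn (fun i : Fin n => z ^ (i : ℕ) * x * (z ^ (i : ℕ))⁻¹)).prod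
      = (x * z) ^ n * (z ^ n)⁻¹ := by
  induction n generalizing x with
  | zero => simp
  | succ n ih =>
    rw [List.ofFn_succ, List.prod_cons]
    have htail : (fun i : Fin n => z ^ ((i.succ : Fin (n+1)) : ℕ) * x * (z ^ ((i.succ : Fin (n+1)) : ℕ))⁻¹)
        = fun i : Fin n => z ^ (i : ℕ) * (z * x * z⁻¹) * (z ^ (i : ℕ))⁻¹ := by
      funext i
      rw [Fin.val_succ, pow_succ']
      group
    simp only [Fin.val_zero, pow_zero, one_mul, inv_one, mul_one]
    rw [htail, ih (z * x * z⁻¹)]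
    have : z * x * z⁻¹ * z = z * x := by group
    rw [this]
    rw [aux_pow_shift x z n]
    have hz : z * (z ^ (n + 1))⁻¹ = (z ^ n)⁻¹ := by
      rw [pow_succ']
      group
    rw [mul_assoc, mul_assoc, hz]

set_option maxHeartbeats 1000000 in
open Fin.CommRing in
open scoped Classical in
lemma osima {H : Type} [Group H] [Finite H] {k : Type} [Field k] {ℓ : ℕ}
    [Fact ℓ.Prime] [CharP k ℓ] (e : MonoidAlgebra k H)
    (hcf : ∀ a b : H, e.coeff (a * b * a⁻¹) = e.coeff b) (hid : e * e = e)
    {y : H} (hy : ℓ ∣ orderOf y) : e.coeff y = 0 := by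
  classical
  haveI : Fintype H := Fintype.ofFinite H
  have hℓ : ℓ.Prime := Fact.out
  obtain ⟨q', hq⟩ : ∃ q', q' + 1 = ℓ ^ Nat.card H := by
    have h1 : 0 < ℓ ^ Nat.card H := pow_pos hℓ.pos _
    exact ⟨ℓ ^ Nat.card H - 1, by omega⟩
  have hq1 : 1 < q' + 1 := by
    rw [hq]
    exact Nat.one_lt_pow Nat.card_pos.ne' hℓ.one_lt
  have hq'1 : 1 ≤ q' := by omega
  have hℓq : ℓ ∣ q' + 1 := by
    rw [hq]
    exact dvd_pow_self ℓ Nat.card_pos.ne'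
  set r := orderOf y with hrdef
  have hr0 : r ≠ 0 := (orderOf_pos y).ne'
  set v := r.factorization ℓ with hvdef
  set d := r / ℓ ^ v with hddef
  have hvd : ℓ ^ v * d = r := Nat.ordProj_mul_ordCompl_eq_self r ℓ
  have hcop : Nat.Coprime ℓ d := Nat.coprime_ordCompl hℓ hr0
  have hcopdq : Nat.Coprime d (q' + 1) := by
    rw [hq]
    exact (hcop.symm).pow_right _
  set t := ((d : ZMod (q' + 1))⁻¹).val with htdef
  have hmod : (d * t) % (q' + 1) = 1 := by
    have h1 : ((d * t : ℕ) : ZMod (q' + 1)) = ((1 : ℕ) : ZMod (q' + 1)) := by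
      push_cast
      rw [htdef]
      haveI : NeZero (q' + 1) := ⟨by omega⟩
      rw [ZMod.natCast_val, ZMod.cast_id]
      exact ZMod.coe_mul_inv_eq_one d hcopdq
    have h2 := (ZMod.natCast_eq_natCast_iff _ _ _).mp h1
    unfold Nat.ModEq at h2
    rwa [Nat.mod_eq_of_lt hq1] at h2
  set s := d * t / (q' + 1) with hsdef
  have hdt : d * t = (q' + 1) * s + 1 := by
    have h := Nat.div_add_mod (d * t) (q' + 1)
    rw [hmod, ← hsdef] at h
    omega
  have hdtl : ¬ ℓ ∣ d * t := by
    intro hcontra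
    have h1 : ℓ ∣ (q' + 1) * s := Dvd.dvd.mul_right hℓq s
    have h2 : ℓ ∣ 1 := by
      have h3 := Nat.dvd_sub hcontra h1
      rwa [hdt, Nat.add_sub_cancel_left] at h3
    have h4 := Nat.le_of_dvd one_pos h2
    have h5 := hℓ.one_lt
    omega
  set twist : Fin (q' + 1) → H := fun i => if i = 0 then y else 1 with htwist
  set ρ : Equiv.Perm (Fin (q' + 1) → H) :=
    { toFun := fun σ i => twist i * σ (i - 1) * (twist i)⁻¹
      invFun := fun σ i => (twist (i + 1))⁻¹ * σ (i + 1) * twist (i + 1)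
      left_inv := by
        intro σ
        funext i
        simp only [add_sub_cancel_right]
        group
      right_inv := by
        intro σ
        funext i
        simp only [sub_add_cancel]
        group } with hρdef
  have hρ_apply : ∀ (σ : Fin (q' + 1) → H) (i : Fin (q' + 1)),
      ρ σ i = twist i * σ (i - 1) * (twist i)⁻¹ := fun σ i => rfl
  have hval1 : ((1 : Fin (q' + 1)) : ℕ) = 1 := by
    rw [Fin.val_one']
    exact Nat.mod_eq_of_lt hq1
  have hsubval : ∀ i : Fin (q' + 1), ((i - 1 : Fin (q' + 1)) : ℕ)
      = if (i : ℕ) = 0 then q' else (i : ℕ) - 1 := by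
    intro i
    rw [Fin.sub_def]
    simp only [hval1]
    by_cases h0 : (i : ℕ) = 0
    · rw [if_pos h0, h0]
      simp only [Nat.add_zero]
      have h4 : q' + 1 - 1 = q' := by omega
      rw [h4]
      exact Nat.mod_eq_of_lt (by omega)
    · rw [if_neg h0]
      have hi1 : 1 ≤ (i : ℕ) := by omega
      have hisz : (i : ℕ) < q' + 1 := i.isLt
      have harith : q' + 1 - 1 + (i : ℕ) = (q' + 1) + ((i : ℕ) - 1) := by omega
      rw [harith, Nat.add_mod_left]
      exact Nat.mod_eq_of_lt (by omega)
  set c : Fin (q' + 1) → ℕ → ℕ := fun i j => (j + q' - (i : ℕ)) / (q' + 1) with hcdef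
  have hclosed : ∀ (j : ℕ) (σ : Fin (q' + 1) → H) (i : Fin (q' + 1)),
      (ρ ^ j) σ i = y ^ (c i j) * σ (i - ((j : ℕ) : Fin (q' + 1))) * (y ^ (c i j))⁻¹ := by
    intro j
    induction j with
    | zero =>
      intro σ i
      have hc0 : c i 0 = 0 := Nat.div_eq_of_lt (by have := i.isLt; omega)
      rw [hc0]
      simp
    | succ j ih =>
      intro σ i
      have hmul : (ρ ^ (j + 1)) σ i = ρ ((ρ ^ j) σ) i := by
        rw [pow_succ']
        rfl
      rw [hmul, hρ_apply, ih]
      have hidx : (i - 1) - ((j : ℕ) : Fin (q' + 1)) = i - (((j + 1 : ℕ)) : Fin (q' + 1)) := by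
        push_cast
        ring
      rw [hidx]
      by_cases h0 : i = 0
      · subst h0
        have htw : twist (0 : Fin (q' + 1)) = y := if_pos rfl
        rw [htw]
        have hc1 : c (0 : Fin (q' + 1)) (j + 1) = c ((0 : Fin (q' + 1)) - 1) j + 1 := by
          have hL : c (0 : Fin (q' + 1)) (j + 1) = j / (q' + 1) + 1 := by
            simp only [hcdef, Fin.val_zero, Nat.sub_zero]
            rw [show j + 1 + q' = j + (q' + 1) from by omega, Nat.add_div_right _ (by omega)]
          have hR : c ((0 : Fin (q' + 1)) - 1) j = j / (q' + 1) := by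
            have hv : ((0 - 1 : Fin (q' + 1)) : ℕ) = q' := by
              rw [hsubval]
              simp
            simp only [hcdef, hv]
            rw [show j + q' - q' = j from by omega]
          rw [hL, hR]
        rw [hc1, pow_succ']
        group
      · have htw : twist i = 1 := if_neg h0
        rw [htw]
        have hi0 : (i : ℕ) ≠ 0 := by
          intro hc
          exact h0 (Fin.ext_iff.mpr (by rw [hc]; rfl))
        have hc1 : c i (j + 1) = c (i - 1) j := by
          simp only [hcdef]
          rw [hsubval, if_neg hi0]
          have := i.isLt
          have h2 : j + 1 + q' - (i : ℕ) = j + q' - ((i : ℕ) - 1) := by omega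
          rw [h2]
        rw [hc1]
        group
  have hρqr : ρ ^ ((q' + 1) * r) = 1 := by
    apply Equiv.ext
    intro σ
    funext i
    have hc1 : c i ((q' + 1) * r) = r := by
      simp only [hcdef]
      have := i.isLt
      have h2 : (q' + 1) * r + q' - (i : ℕ) = (q' - (i : ℕ)) + (q' + 1) * r := by omega
      rw [h2, Nat.add_mul_div_left _ _ (by omega), Nat.div_eq_of_lt (by omega)]
      omega
    have hcast : (((q' + 1) * r : ℕ) : Fin (q' + 1)) = 0 := by
      rw [Nat.cast_mul, Fin.natCast_self, zero_mul]
    rw [hclosed, hc1, hcast, sub_zero, hrdef, pow_orderOf_eq_one]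
    simp
  set η := ρ ^ d with hηdef
  have hη1 : η ^ ((q' + 1) * ℓ ^ v) = 1 := by
    rw [hηdef, ← pow_mul]
    have harith : d * ((q' + 1) * ℓ ^ v) = (q' + 1) * r := by
      rw [← hvd]
      ring
    rw [harith, hρqr]
  have hPη : IsPGroup ℓ ↥(Subgroup.zpowers η) := by
    rw [IsPGroup.iff_card]
    have hcard : Nat.card ↥(Subgroup.zpowers η) = orderOf η := Nat.card_zpowers η
    have hdvd : orderOf η ∣ ℓ ^ (Nat.card H + v) := by
      have h1 : orderOf η ∣ (q' + 1) * ℓ ^ v := orderOf_dvd_of_pow_eq_one hη1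
      have h2 : (q' + 1) * ℓ ^ v = ℓ ^ (Nat.card H + v) := by rw [hq, pow_add]
      rwa [h2] at h1
    obtain ⟨m, _, hm⟩ := (Nat.dvd_prime_pow hℓ).mp hdvd
    exact ⟨m, by rw [hcard, hm]⟩
  set F : (Fin (q' + 1) → H) → k :=
    fun σ => if (List.ofFn σ).prod = y then ∏ i, e.coeff (σ i) else 0 with hFdef
  have hzso : ((0 : Fin (q' + 1)) - 1) = Fin.last q' := by
    apply Fin.ext
    rw [hsubval]
    simp [Fin.val_last]
  have hsso : ∀ i : Fin q', (i.succ : Fin (q' + 1)) - 1 = i.castSucc := by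
    intro i
    apply Fin.ext
    rw [hsubval]
    have h1 : ((i.succ : Fin (q' + 1)) : ℕ) = (i : ℕ) + 1 := Fin.val_succ i
    rw [h1]
    simp [Fin.coe_castSucc]
  have hFρ : ∀ σ, F (ρ σ) = F σ := by
    intro σ
    have hhead : ρ σ 0 = y * σ (Fin.last q') * y⁻¹ := by
      rw [hρ_apply, hzso]
      simp [htwist]
    have htail : ∀ i : Fin q', ρ σ i.succ = σ i.castSucc := by
      intro i
      rw [hρ_apply, hsso]
      have h1 : twist i.succ = 1 := if_neg (Fin.succ_ne_zero i)
      rw [h1]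
      group
    have hnewlist : List.ofFn (ρ σ)
        = (y * σ (Fin.last q') * y⁻¹) :: List.ofFn (fun i : Fin q' => σ i.castSucc) := by
      rw [List.ofFn_succ]
      rw [hhead]
      congr 1
      exact congrArg List.ofFn (funext htail)
    have holdlist : List.ofFn σ
        = (List.ofFn (fun i : Fin q' => σ i.castSucc)).concat (σ (Fin.last q')) :=
      List.ofFn_succ' σ
    set P := (List.ofFn (fun i : Fin q' => σ i.castSucc)).prod with hPdef
    have hnewprod : (List.ofFn (ρ σ)).prod = (y * σ (Fin.last q') * y⁻¹) * P := by
      rw [hnewlist, List.prod_cons]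
    have holdprod : (List.ofFn σ).prod = P * σ (Fin.last q') := by
      rw [holdlist, List.prod_concat]
    have hiff : ((List.ofFn (ρ σ)).prod = y) ↔ ((List.ofFn σ).prod = y) := by
      rw [hnewprod, holdprod]
      constructor
      · intro h
        have hP : P = y * (σ (Fin.last q'))⁻¹ := by
          have h2 : y⁻¹ * (y * σ (Fin.last q') * y⁻¹ * P) = y⁻¹ * y := by rw [h]
          have h3 : σ (Fin.last q') * y⁻¹ * P = 1 := by
            calc σ (Fin.last q') * y⁻¹ * P = y⁻¹ * (y * σ (Fin.last q') * y⁻¹ * P) := by group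
            _ = y⁻¹ * y := h2
            _ = 1 := by group
          calc P = (σ (Fin.last q') * y⁻¹)⁻¹ * (σ (Fin.last q') * y⁻¹ * P) := by group
          _ = (σ (Fin.last q') * y⁻¹)⁻¹ * 1 := by rw [h3]
          _ = y * (σ (Fin.last q'))⁻¹ := by group
        rw [hP]
        group
      · intro h
        have hP : P = y * (σ (Fin.last q'))⁻¹ := by
          rw [← h]
          group
        rw [hP]
        group
    have hprode : ∏ i, e.coeff (ρ σ i) = ∏ i, e.coeff (σ i) := by
      rw [Fin.prod_univ_succ, Fin.prod_univ_castSucc (f := fun i => e.coeff (σ i))]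
      rw [hhead, hcf]
      rw [Finset.prod_congr rfl (fun i _ => by rw [htail i])]
      rw [mul_comm]
    rw [hFdef]
    simp only
    exact if_congr hiff hprode rfl
  have hfix : ∀ σ, η σ = σ → F σ = 0 := by
    intro σ hσ
    by_cases hp : (List.ofFn σ).prod = y
    · exfalso
      have hηm : ∀ m : ℕ, (η ^ m) σ = σ := by
        intro m
        induction m with
        | zero => rfl
        | succ m ih =>
          rw [pow_succ]
          have h1 : ((η ^ m * η) σ) = (η ^ m) (η σ) := rfl
          rw [h1, hσ, ih]
      have hσt : (ρ ^ (d * t)) σ = σ := by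
        rw [pow_mul]
        exact hηm t
      have R : ∀ i : Fin (q' + 1), σ i
          = y ^ (c i (d * t)) * σ (i - ((d * t : ℕ) : Fin (q' + 1))) * (y ^ (c i (d * t)))⁻¹ := by
        intro i
        conv_lhs => rw [← hσt]
        exact hclosed (d * t) σ i
      have hcast1 : ((d * t : ℕ) : Fin (q' + 1)) = 1 := by
        rw [hdt, Nat.cast_add, Nat.cast_mul, Fin.natCast_self, zero_mul, zero_add, Nat.cast_one]
      have hcs : ∀ i : Fin (q' + 1), i ≠ 0 → c i (d * t) = s := by
        intro i h0
        have hi0 : (i : ℕ) ≠ 0 := by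
          intro hcon
          exact h0 (Fin.ext_iff.mpr (by rw [hcon]; rfl))
        have := i.isLt
        simp only [hcdef]
        have h2 : d * t + q' - (i : ℕ) = (1 + q' - (i : ℕ)) + (q' + 1) * s := by omega
        rw [h2, Nat.add_mul_div_left _ _ (by omega), Nat.div_eq_of_lt (by omega)]
        omega
      set x := σ 0 with hxdef
      set z := y ^ s with hzdef
      have hstep : ∀ i : Fin (q' + 1), i ≠ 0 → σ i = z * σ (i - 1) * z⁻¹ := by
        intro i h0
        conv_lhs => rw [R i]
        rw [hcast1, hcs i h0]
      have hvalm : ∀ m : ℕ, m ≤ q' → σ ((m : ℕ) : Fin (q' + 1)) = z ^ m * x * (z ^ m)⁻¹ := by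
        intro m
        induction m with
        | zero =>
          intro _
          simp [hxdef]
        | succ m ih =>
          intro hm
          have hlt : m + 1 < q' + 1 := by omega
          have hne : (((m + 1 : ℕ)) : Fin (q' + 1)) ≠ 0 := by
            intro hcon
            have h1 := Fin.ext_iff.mp hcon
            rw [Fin.val_cast_of_lt hlt] at h1
            simp at h1
          have hsub : (((m + 1 : ℕ)) : Fin (q' + 1)) - 1 = ((m : ℕ) : Fin (q' + 1)) := by
            push_cast
            rw [add_sub_cancel_right]
          rw [hstep _ hne, hsub, ih (by omega), pow_succ']
          group
      have hfun : σ = fun i : Fin (q' + 1) => z ^ (i : ℕ) * x * (z ^ (i : ℕ))⁻¹ := by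
        funext i
        have h1 : (((i : ℕ) : ℕ) : Fin (q' + 1)) = i := Fin.cast_val_eq_self i
        conv_lhs => rw [← h1]
        exact hvalm (i : ℕ) (by have := i.isLt; omega)
      have hprod2 : (List.ofFn σ).prod = (x * z) ^ (q' + 1) * (z ^ (q' + 1))⁻¹ := by
        conv_lhs => rw [hfun]
        exact list_prod_conj z (q' + 1) x
      have hXZ : (x * z) ^ (q' + 1) = y ^ (d * t) := by
        have h1 : (x * z) ^ (q' + 1) * (z ^ (q' + 1))⁻¹ = y := by rw [← hprod2]; exact hp
        have h2 : (x * z) ^ (q' + 1) = y * z ^ (q' + 1) := by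
          rw [mul_inv_eq_iff_eq_mul] at h1
          exact h1
        rw [h2, hzdef, ← pow_mul, ← pow_succ']
        congr 1
        rw [mul_comm s (q' + 1)]
        omega
      have hA : ¬ ℓ ∣ orderOf ((x * z) ^ (q' + 1)) := by
        have h1 := q_choice hℓ (x * z)
        rwa [← hq] at h1
      have hB : ℓ ∣ orderOf (y ^ (d * t)) := by
        rw [orderOf_pow]
        have hG0dvd : Nat.gcd (orderOf y) (d * t) ∣ d * t := Nat.gcd_dvd_right _ _
        have hG0l : ¬ ℓ ∣ Nat.gcd (orderOf y) (d * t) := fun hcon => hdtl (hcon.trans hG0dvd)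
        have hsplit : Nat.gcd (orderOf y) (d * t) * (orderOf y / Nat.gcd (orderOf y) (d * t))
            = orderOf y := Nat.mul_div_cancel' (Nat.gcd_dvd_left _ _)
        have hld : ℓ ∣ Nat.gcd (orderOf y) (d * t) * (orderOf y / Nat.gcd (orderOf y) (d * t)) := by
          rw [hsplit]
          exact hy
        rcases (Nat.Prime.dvd_mul hℓ).mp hld with h | h
        · exact absurd h hG0l
        · exact h
      rw [hXZ] at hA
      exact hA hB
    · rw [hFdef]
      simp only
      rw [if_neg hp]
  have hFsub : ∀ (g : ↥(Subgroup.zpowers η)) (σ : Fin (q' + 1) → H),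
      F ((Subgroup.zpowers η).subtype g σ) = F σ := by
    intro g σ
    obtain ⟨j, hj⟩ := Subgroup.mem_zpowers_iff.mp g.2
    have hFη : ∀ x, F (η x) = F x := fun x => perm_inv_nat ρ F hFρ d x
    have h1 : (Subgroup.zpowers η).subtype g = η ^ j := hj.symm
    rw [h1]
    exact perm_inv_int η F hFη j σ
  have hepow' : ∀ n : ℕ, e ^ (n + 1) = e := by
    intro n
    induction n with
    | zero => rw [pow_one]
    | succ n ih => rw [pow_succ, ih, hid]
  have hepow : e ^ (q' + 1) = e := hepow' q'
  have hsum : e.coeff y = ∑ σ : Fin (q' + 1) → H, F σ := by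
    conv_lhs => rw [← hepow]
    rw [ma_pow_apply]
  rw [hsum]
  exact sum_invariant_eq_zero hPη (Subgroup.zpowers η).subtype F hFsub
    (fun σ h => hfix σ (h ⟨η, Subgroup.mem_zpowers η⟩))

open scoped Classical in
lemma conv_centralizer {k : Type} [Field k] {ℓ : ℕ} [Fact ℓ.Prime] [CharP k ℓ]
    {H : Type} [Group H] [Fintype H] (D : Subgroup H) (hD : IsPGroup ℓ ↥D)
    (a b : MonoidAlgebra k H)
    (ha : ∀ u w : H, a.coeff (u * w * u⁻¹) = a.coeff w)
    (hb : ∀ u w : H, b.coeff (u * w * u⁻¹) = b.coeff w)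
    {x : H} (hx : x ∈ Subgroup.centralizer (D : Set H)) :
    (a * b).coeff x = ∑ u ∈ Finset.univ.filter (fun u => u ∈ Subgroup.centralizer (D : Set H)),
      a.coeff u * b.coeff (u⁻¹ * x) := by
  classical
  rw [conv_apply]
  set φ : ↥D →* Equiv.Perm H :=
    { toFun := fun d => (MulAut.conj (d : H)).toEquiv
      map_one' := by
        apply Equiv.ext
        intro u
        simp
      map_mul' := by
        intro d1 d2
        apply Equiv.ext
        intro u
        simp [mul_assoc] } with hφdef
  have hφ_apply : ∀ (d : ↥D) (u : H), φ d u = (d : H) * u * (d : H)⁻¹ := fun d u => rfl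
  have hf : ∀ (d : ↥D) (u : H), (fun u => a.coeff u * b.coeff (u⁻¹ * x)) (φ d u)
      = (fun u => a.coeff u * b.coeff (u⁻¹ * x)) u := by
    intro d u
    simp only [hφ_apply]
    have hxd : (d : H) * x = x * (d : H) :=
      Subgroup.mem_centralizer_iff.mp hx (d : H) d.2
    have h1 : a.coeff ((d : H) * u * (d : H)⁻¹) = a.coeff u := ha _ _
    have hxd' : (d : H)⁻¹ * x = x * (d : H)⁻¹ := by
      have h9 : (d : H)⁻¹ * (x * (d : H)) * (d : H)⁻¹
          = (d : H)⁻¹ * ((d : H) * x) * (d : H)⁻¹ := by rw [hxd]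
      simpa [mul_assoc] using h9
    have h2 : ((d : H) * u * (d : H)⁻¹)⁻¹ * x = (d : H) * (u⁻¹ * x) * (d : H)⁻¹ := by
      calc ((d : H) * u * (d : H)⁻¹)⁻¹ * x = (d : H) * u⁻¹ * ((d : H)⁻¹ * x) := by group
      _ = (d : H) * u⁻¹ * (x * (d : H)⁻¹) := by rw [hxd']
      _ = (d : H) * (u⁻¹ * x) * (d : H)⁻¹ := by group
    rw [h1, h2, hb]
  rw [sum_invariant_eq_sum_fixed hD φ (fun u => a.coeff u * b.coeff (u⁻¹ * x)) hf]
  apply Finset.sum_congr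
  · apply Finset.ext
    intro u
    simp only [Finset.mem_filter, Finset.mem_univ, true_and]
    constructor
    · intro h
      rw [Subgroup.mem_centralizer_iff]
      intro h' hh'
      have h5 := h ⟨h', hh'⟩
      rw [hφ_apply] at h5
      calc h' * u = (h' * u * h'⁻¹) * h' := by group
      _ = u * h' := by rw [h5]
    · intro h d
      rw [hφ_apply]
      have h5 := Subgroup.mem_centralizer_iff.mp h (d : H) d.2
      calc (d : H) * u * (d : H)⁻¹ = u * (d : H) * (d : H)⁻¹ := by rw [h5]
      _ = u := by group
  · intro u _
    rfl

section conjmach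

variable {k : Type} [Field k] {Gt : Type} [Group Gt] (J : Subgroup Gt) [hJ : J.Normal]

def cHom (g : Gt) : ↥J →* ↥J where
  toFun := fun x : ↥J => (⟨g * ↑x * g⁻¹, hJ.conj_mem ↑x x.2 g⟩ : ↥J)
  map_one' := by
    apply Subtype.ext
    simp
  map_mul' := by
    intro a b
    apply Subtype.ext
    show g * ↑(a * b) * g⁻¹ = (g * ↑a * g⁻¹) * (g * ↑b * g⁻¹)
    rw [Subgroup.coe_mul]
    group

lemma conjBlock_eq (g : Gt) (α : MonoidAlgebra k ↥J) :
    conjBlock J g α = MonoidAlgebra.ofCoeff (Finsupp.mapDomain (⇑(cHom J g)) α.coeff) := rfl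

lemma conjBlock_mul (g : Gt) (α β : MonoidAlgebra k ↥J) :
    conjBlock J g (α * β) = conjBlock J g α * conjBlock J g β := by
  rw [conjBlock_eq, conjBlock_eq, conjBlock_eq]
  exact MonoidAlgebra.mapDomain_mul (cHom J g) α β

lemma conjBlock_comp (g h : Gt) (α : MonoidAlgebra k ↥J) :
    conjBlock J g (conjBlock J h α) = conjBlock J (g * h) α := by
  rw [conjBlock_eq, conjBlock_eq, conjBlock_eq, MonoidAlgebra.coeff_ofCoeff, ← Finsupp.mapDomain_comp]
  congr 2
  funext x
  apply Subtype.ext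
  show g * ↑(cHom J h x) * g⁻¹ = (g * h) * ↑x * (g * h)⁻¹
  show g * (h * ↑x * h⁻¹) * g⁻¹ = (g * h) * ↑x * (g * h)⁻¹
  group

lemma conjBlock_one (α : MonoidAlgebra k ↥J) : conjBlock J 1 α = α := by
  rw [conjBlock_eq]
  have hfun : ⇑(cHom J (1 : Gt)) = id := by
    funext x
    apply Subtype.ext
    show (1 : Gt) * ↑x * (1 : Gt)⁻¹ = ↑x
    group
  rw [hfun, Finsupp.mapDomain_id, MonoidAlgebra.ofCoeff_coeff]

lemma cHom_inj (g : Gt) : Function.Injective ⇑(cHom J g) := by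
  intro x y h
  apply Subtype.ext
  have h1 : g * ↑x * g⁻¹ = g * ↑y * g⁻¹ := congrArg Subtype.val h
  have h2 := mul_right_cancel h1
  exact mul_left_cancel h2

lemma conjBlock_apply (g : Gt) (α : MonoidAlgebra k ↥J) (w : ↥J) :
    (conjBlock J g α).coeff w = α.coeff (cHom J g⁻¹ w) := by
  have hcc : cHom J g (cHom J g⁻¹ w) = w := by
    apply Subtype.ext
    show g * (g⁻¹ * ↑w * g⁻¹⁻¹) * g⁻¹ = ↑w
    group
  conv_lhs => rw [← hcc]
  rw [conjBlock_eq]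
  exact Finsupp.mapDomain_apply (cHom_inj J g) α.coeff _

lemma conjBlock_zero (g : Gt) : conjBlock J g (0 : MonoidAlgebra k ↥J) = 0 := by
  rw [conjBlock_eq]
  exact MonoidAlgebra.mapDomain_zero _

end conjmach


/-- Let `J ⊴ G̃`, `G ≤ J` with `G ⊴ G̃`, `ℓ` a prime, `B` an `ℓ`-block of `J` with defect
group `D`. If `C_{G̃}(C_J(D)_{ℓ'}) · G = G̃`, where `C_J(D)_{ℓ'}` denotes the set of
`ℓ`-regular elements of `C_J(D)`, then `B` is `G̃`-stable: `B^g = B` for all `g ∈ G̃`. -/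
theorem block_stable_of_centralizer_cover {Gt : Type} [Group Gt] [Finite Gt]
    {k : Type} [Field k] [IsAlgClosed k] (ℓ : ℕ) [Fact ℓ.Prime] [CharP k ℓ]
    (J G : Subgroup Gt) [J.Normal] [G.Normal] (hGJ : G ≤ J)
    (e : MonoidAlgebra k ↥J) (he : IsBlockIdem k ↥J e)
    (D : Subgroup ↥J) (hD : IsDefectGroup ℓ e D)
    (hhyp : Subgroup.centralizer
        {x : Gt | x ∈ Subgroup.centralizer ((D.map J.subtype : Subgroup Gt) : Set Gt) ⊓ J
          ∧ ¬ ℓ ∣ orderOf x} ⊔ G = ⊤) :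
    ∀ g : Gt, conjBlock J g e = e := by
  classical
  obtain ⟨hcen, hidem, hne, hprim⟩ := he
  haveI : Fintype ↥J := Fintype.ofFinite _
  -- e is a class function
  have hcfe : ∀ a b : ↥J, e.coeff (a * b * a⁻¹) = e.coeff b := by
    intro a b
    have hc := Subalgebra.mem_center_iff.mp hcen (MonoidAlgebra.single a 1)
    have h1 := congrArg (fun f : MonoidAlgebra k ↥J => f.coeff (a * b)) hc
    simp only [MonoidAlgebra.coeff_single_mul_apply, MonoidAlgebra.coeff_mul_single_apply, one_mul,
      mul_one, inv_mul_cancel_left] at h1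
    exact h1.symm
  -- stabilizer subgroup
  set S : Subgroup Gt :=
    { carrier := {g : Gt | conjBlock J g e = e}
      one_mem' := conjBlock_one J e
      mul_mem' := by
        intro a b haa hbb
        show conjBlock J (a * b) e = e
        rw [← conjBlock_comp, hbb, haa]
      inv_mem' := by
        intro a haa
        show conjBlock J a⁻¹ e = e
        conv_lhs => rw [← haa]
        rw [conjBlock_comp, inv_mul_cancel, conjBlock_one] } with hSdef
  -- J stabilizes e
  have hJ_le : ∀ w : Gt, w ∈ J → w ∈ S := by
    intro w hw
    show conjBlock J w e = e
    refine MonoidAlgebra.ext (Finsupp.ext ?_)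
    intro u
    rw [conjBlock_apply]
    have hw' : w⁻¹ ∈ J := inv_mem hw
    have heq : cHom J w⁻¹ u = (⟨w⁻¹, hw'⟩ : ↥J) * u * (⟨w⁻¹, hw'⟩ : ↥J)⁻¹ := by
      apply Subtype.ext
      show w⁻¹ * ↑u * w⁻¹⁻¹ = w⁻¹ * ↑u * (w⁻¹)⁻¹
      rfl
    rw [heq, hcfe]
  -- the centralizer stabilizes e
  have hC_le : ∀ c : Gt, c ∈ Subgroup.centralizer
      {x : Gt | x ∈ Subgroup.centralizer ((D.map J.subtype : Subgroup Gt) : Set Gt) ⊓ J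
        ∧ ¬ ℓ ∣ orderOf x} → c ∈ S := by
    intro c hc
    show conjBlock J c e = e
    by_contra hneq
    set E := conjBlock J c e with hEdef
    -- E is a class function
    have hcfE : ∀ a b : ↥J, E.coeff (a * b * a⁻¹) = E.coeff b := by
      intro a b
      rw [hEdef, conjBlock_apply, conjBlock_apply]
      have h1 : cHom J c⁻¹ (a * b * a⁻¹)
          = cHom J c⁻¹ a * cHom J c⁻¹ b * (cHom J c⁻¹ a)⁻¹ := by
        rw [map_mul, map_mul, map_inv]
      rw [h1, hcfe]
    -- E is idempotent
    have hidE : E * E = E := by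
      rw [hEdef, ← conjBlock_mul, hidem]
    -- E is central
    have hcenE : E ∈ Subalgebra.center k (MonoidAlgebra k ↥J) := by
      rw [Subalgebra.mem_center_iff]
      intro f
      have hf : f = conjBlock J c (conjBlock J c⁻¹ f) := by
        rw [conjBlock_comp, mul_inv_cancel, conjBlock_one]
      conv_lhs => rw [hf]
      conv_rhs => rw [hf]
      rw [hEdef, ← conjBlock_mul, ← conjBlock_mul]
      congr 1
      exact Subalgebra.mem_center_iff.mp hcen _
    -- E is primitive
    have hprimE : ∀ f : MonoidAlgebra k ↥J, f ∈ Subalgebra.center k (MonoidAlgebra k ↥J) →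
        f * f = f → E * f = f → f = 0 ∨ f = E := by
      intro f hf1 hf2 hf3
      have hf0cen : conjBlock J c⁻¹ f ∈ Subalgebra.center k (MonoidAlgebra k ↥J) := by
        rw [Subalgebra.mem_center_iff]
        intro f'
        have hf' : f' = conjBlock J c⁻¹ (conjBlock J c f') := by
          rw [conjBlock_comp, inv_mul_cancel, conjBlock_one]
        conv_lhs => rw [hf']
        conv_rhs => rw [hf']
        rw [← conjBlock_mul, ← conjBlock_mul]
        congr 1
        exact Subalgebra.mem_center_iff.mp hf1 _
      have hf0id : conjBlock J c⁻¹ f * conjBlock J c⁻¹ f = conjBlock J c⁻¹ f := by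
        rw [← conjBlock_mul, hf2]
      have hf0e : e * conjBlock J c⁻¹ f = conjBlock J c⁻¹ f := by
        have h4 : conjBlock J c⁻¹ (E * f) = conjBlock J c⁻¹ f := by rw [hf3]
        rw [conjBlock_mul, hEdef, conjBlock_comp, inv_mul_cancel, conjBlock_one] at h4
        exact h4
      rcases hprim _ hf0cen hf0id hf0e with h | h
      · left
        have := congrArg (conjBlock J c) h
        rwa [conjBlock_comp, mul_inv_cancel, conjBlock_one, conjBlock_zero] at this
      · right
        have := congrArg (conjBlock J c) h
        rwa [conjBlock_comp, mul_inv_cancel, conjBlock_one, ← hEdef] at this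
    -- commute
    have hcomm : E * e = e * E := Subalgebra.mem_center_iff.mp hcen E
    -- orthogonality : e * E = 0
    have horth : e * E = 0 := by
      have hfcen : e * E ∈ Subalgebra.center k (MonoidAlgebra k ↥J) :=
        Subalgebra.mul_mem _ hcen hcenE
      have hfid : (e * E) * (e * E) = e * E := by
        calc (e * E) * (e * E) = e * (E * e) * E := by noncomm_ring
        _ = e * (e * E) * E := by rw [hcomm]
        _ = (e * e) * (E * E) := by noncomm_ring
        _ = e * E := by rw [hidem, hidE]
      have hfe : e * (e * E) = e * E := by rw [← mul_assoc, hidem]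
      rcases hprim _ hfcen hfid hfe with h | h
      · exact h
      · exfalso
        have hfE : E * (e * E) = e * E := by
          calc E * (e * E) = (E * e) * E := by rw [mul_assoc]
          _ = (e * E) * E := by rw [hcomm]
          _ = e * (E * E) := by rw [mul_assoc]
          _ = e * E := by rw [hidE]
        rcases hprimE _ hfcen hfid hfE with h2 | h2
        · rw [h2] at h
          exact hne h.symm
        · rw [h] at h2
          exact hneq h2.symm
    -- E agrees with e on the centralizer of D
    have hEe : ∀ w : ↥J, w ∈ Subgroup.centralizer (D : Set ↥J) → E.coeff w = e.coeff w := by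
      intro w hw
      rw [hEdef, conjBlock_apply]
      by_cases hord : ℓ ∣ orderOf w
      · have hord2 : ℓ ∣ orderOf (cHom J c⁻¹ w) := by
          have h5 : orderOf (cHom J c⁻¹ w) = orderOf w := by
            rw [← Subgroup.orderOf_coe, ← Subgroup.orderOf_coe w]
            show orderOf (c⁻¹ * ↑w * c⁻¹⁻¹) = orderOf (↑w : Gt)
            have h6 : c⁻¹ * ↑w * c⁻¹⁻¹ = (MulAut.conj c⁻¹).toMonoidHom ↑w := by
              simp [MulAut.conj_apply]
            rw [h6]
            exact orderOf_injective _ (MulEquiv.injective _) _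
          rw [h5]
          exact hord
        rw [osima e hcfe hidem hord2, osima e hcfe hidem hord]
      · have hwS : (↑w : Gt) ∈ {x : Gt | x ∈ Subgroup.centralizer
            ((D.map J.subtype : Subgroup Gt) : Set Gt) ⊓ J ∧ ¬ ℓ ∣ orderOf x} := by
          constructor
          · rw [Subgroup.mem_inf]
            constructor
            · rw [Subgroup.mem_centralizer_iff]
              intro h hh
              rw [SetLike.mem_coe, Subgroup.mem_map] at hh
              obtain ⟨dd, hdd, rfl⟩ := hh
              have h7 := Subgroup.mem_centralizer_iff.mp hw dd hdd
              have h8 := congrArg Subtype.val h7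
              exact h8
            · exact w.2
          · rw [Subgroup.orderOf_coe]
            exact hord
        have h9 := Subgroup.mem_centralizer_iff.mp hc _ hwS
        -- h9 : ↑w * c = c * ↑w
        have h10 : cHom J c⁻¹ w = w := by
          apply Subtype.ext
          show c⁻¹ * ↑w * c⁻¹⁻¹ = ↑w
          rw [inv_inv]
          calc c⁻¹ * ↑w * c = c⁻¹ * (↑w * c) := by rw [mul_assoc]
          _ = c⁻¹ * (c * ↑w) := by rw [h9]
          _ = ↑w := by group
        rw [h10]
    -- contradiction with Brauer nonvanishing
    obtain ⟨x₀, hx₀mem, hx₀ne⟩ := hD.2.1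
    apply hx₀ne
    have hkey : ∀ xx : ↥J, xx ∈ Subgroup.centralizer (D : Set ↥J) → e.coeff xx = 0 := by
      intro xx hxx
      have h1 : (e * E).coeff xx = ∑ u ∈ Finset.univ.filter
          (fun u => u ∈ Subgroup.centralizer (D : Set ↥J)), e.coeff u * E.coeff (u⁻¹ * xx) :=
        conv_centralizer D hD.1 e E hcfe hcfE hxx
      have h2 : (e * e).coeff xx = ∑ u ∈ Finset.univ.filter
          (fun u => u ∈ Subgroup.centralizer (D : Set ↥J)), e.coeff u * e.coeff (u⁻¹ * xx) :=
        conv_centralizer D hD.1 e e hcfe hcfe hxx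
      have h3 : (e * E).coeff xx = (e * e).coeff xx := by
        rw [h1, h2]
        apply Finset.sum_congr rfl
        intro u hu
        have hu2 := (Finset.mem_filter.mp hu).2
        have humem : u⁻¹ * xx ∈ Subgroup.centralizer (D : Set ↥J) :=
          mul_mem (inv_mem hu2) hxx
        rw [hEe _ humem]
      have h4 : (e * E).coeff xx = 0 := by rw [horth]; rfl
      calc e.coeff xx = (e * e).coeff xx := by rw [hidem]
      _ = (e * E).coeff xx := h3.symm
      _ = 0 := h4
    exact hkey x₀ hx₀mem
  -- conclude
  intro g
  have hgtop : g ∈ (⊤ : Subgroup Gt) := Subgroup.mem_top g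
  rw [← hhyp] at hgtop
  have hle : Subgroup.centralizer
      {x : Gt | x ∈ Subgroup.centralizer ((D.map J.subtype : Subgroup Gt) : Set Gt) ⊓ J
        ∧ ¬ ℓ ∣ orderOf x} ⊔ G ≤ S := by
    apply sup_le
    · intro c hcc
      exact hC_le c hcc
    · intro w hw
      exact hJ_le w (hGJ hw)
  exact hle hgtop
end
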